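/- Let $L, m > 0$, let $a, b \in C^1([-L,L])$ be positive, and let $G \in C^{1,1}_{loc}(\mathbb{R})$ with $G \ge G(-m) = G(m)$ on $\mathbb{R}$. Suppose there exists $x_0 \in [-L,L]$ such that $(ab)' \le 0$ on $(-L, x_0]$ and $(ab)' \ge 0$ on $[x_0, L)$. Then every solution $u \in C^2$ of $-(a u')' = -b G'(u)$ on $(-L,L)$ with $u(L) = -u(-L) = m$ satisfies $u'(x) > 0$ for all $x \in [-L,L]$; in particular $u$ is strictly increasing. -/

import Mathlib

open Set Metric Filter Topology

lemma aux_lipschitz_on_compact {f : ℝ → ℝ} (hf : LocallyLipschitz f) (P Q : ℝ) :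
    ∃ K : ℝ, 0 ≤ K ∧ ∀ x ∈ Icc P Q, ∀ y ∈ Icc P Q, |f x - f y| ≤ K * |x - y| := by
  obtain ⟨M, hM⟩ := isCompact_Icc.exists_bound_of_continuousOn
    (hf.continuous.continuousOn (s := Icc P Q))
  set M' : ℝ := max M 0 with hM'def
  have hM' : ∀ x ∈ Icc P Q, |f x| ≤ M' := fun x hx => (hM x hx).trans (le_max_left _ _)
  choose Kx tx htx hlip using hf
  have hcov : Icc P Q ⊆ ⋃ x : ℝ, interior (tx x) := fun y _ =>
    mem_iUnion.mpr ⟨y, mem_interior_iff_mem_nhds.mpr (htx y)⟩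
  obtain ⟨t, ht⟩ := isCompact_Icc.elim_finite_subcover (fun x => interior (tx x))
    (fun _ => isOpen_interior) hcov
  obtain ⟨δ, hδ, hball⟩ := lebesgue_number_lemma_of_metric isCompact_Icc
    (c := fun i : {x // x ∈ t} => interior (tx i)) (fun _ => isOpen_interior)
    (fun y hy => by
      obtain ⟨i, hi, hyi⟩ := mem_iUnion₂.mp (ht hy)
      exact mem_iUnion.mpr ⟨⟨i, hi⟩, hyi⟩)
  set K₁ : NNReal := t.sup Kx with hK₁def
  refine ⟨max (K₁ : ℝ) (2 * M' / δ), le_max_of_le_left K₁.coe_nonneg, ?_⟩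
  intro x hx y hy
  rcases lt_or_ge (dist x y) δ with h | h
  · obtain ⟨i, hi⟩ := hball x hx
    have hxball : x ∈ interior (tx i) := hi (mem_ball_self hδ)
    have hyball : y ∈ interior (tx i) := hi (by rwa [mem_ball, dist_comm])
    have := (hlip i).dist_le_mul x (interior_subset hxball) y (interior_subset hyball)
    rw [Real.dist_eq, Real.dist_eq] at this
    refine this.trans (mul_le_mul_of_nonneg_right ?_ (abs_nonneg _))
    exact le_max_of_le_left (by exact_mod_cast Finset.le_sup i.2)
  · have h1 : |f x - f y| ≤ 2 * M' :=
      (abs_sub _ _).trans (by linarith [hM' x hx, hM' y hy])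
    have h2 : 2 * M' / δ * δ ≤ 2 * M' / δ * |x - y| := by
      apply mul_le_mul_of_nonneg_left
      · rwa [Real.dist_eq] at h
      · positivity
    calc |f x - f y| ≤ 2 * M' := h1
      _ = 2 * M' / δ * δ := by field_simp
      _ ≤ 2 * M' / δ * |x - y| := h2
      _ ≤ max (K₁ : ℝ) (2 * M' / δ) * |x - y| :=
          mul_le_mul_of_nonneg_right (le_max_right _ _) (abs_nonneg _)

theorem stmt_6 (L m x₀ : ℝ) (hL : 0 < L) (hm : 0 < m) (hx₀ : x₀ ∈ Icc (-L) L)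
    (a b ab' G G' u u' : ℝ → ℝ)
    (haC1 : ContDiffOn ℝ 1 a (Icc (-L) L)) (hbC1 : ContDiffOn ℝ 1 b (Icc (-L) L))
    (hapos : ∀ x ∈ Icc (-L) L, 0 < a x) (hbpos : ∀ x ∈ Icc (-L) L, 0 < b x)
    (hab : ∀ x ∈ Icc (-L) L,
      HasDerivWithinAt (fun y => a y * b y) (ab' x) (Icc (-L) L) x)
    (hab₁ : ∀ x ∈ Ioc (-L) x₀, ab' x ≤ 0) (hab₂ : ∀ x ∈ Ico x₀ L, 0 ≤ ab' x)
    (hG : ∀ s, HasDerivAt G (G' s) s) (hG'lip : LocallyLipschitz G')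
    (hGge : ∀ s : ℝ, G m ≤ G s) (hGsym : G (-m) = G m)
    (hu : ∀ x ∈ Icc (-L) L, HasDerivWithinAt u (u' x) (Icc (-L) L) x)
    (hu'c : ContinuousOn u' (Icc (-L) L))
    (hode : ∀ x ∈ Ioo (-L) L, HasDerivAt (fun y => a y * u' y) (b x * G' (u x)) x)
    (huL : u L = m) (humL : u (-L) = -m) :
    (∀ x ∈ Icc (-L) L, 0 < u' x) ∧ StrictMonoOn u (Icc (-L) L) := by
  obtain ⟨hx₀1, hx₀2⟩ := hx₀
  have hLL : -L < L := by linarith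
  have hLmem : L ∈ Icc (-L) L := ⟨hLL.le, le_rfl⟩
  have hmLmem : (-L : ℝ) ∈ Icc (-L) L := ⟨le_rfl, hLL.le⟩
  have hucont : ContinuousOn u (Icc (-L) L) := fun x hx => (hu x hx).continuousWithinAt
  have hacont : ContinuousOn a (Icc (-L) L) := haC1.continuousOn
  have hbcont : ContinuousOn b (Icc (-L) L) := hbC1.continuousOn
  have hG'cont : Continuous G' := hG'lip.continuous
  set w : ℝ → ℝ := fun y => a y * u' y with hwdef
  have hwcont : ContinuousOn w (Icc (-L) L) := hacont.mul hu'c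
  -- derivative of G at ±m vanishes
  have hG'm : G' m = 0 := by
    have h1 : IsLocalMin G m := Filter.Eventually.of_forall hGge
    exact h1.hasDerivAt_eq_zero (hG m)
  have hG'mm : G' (-m) = 0 := by
    have h1 : IsLocalMin G (-m) := Filter.Eventually.of_forall (fun s => hGsym ▸ hGge s)
    exact h1.hasDerivAt_eq_zero (hG (-m))
  -- derivative of w within Icc at every point (incl. endpoints)
  have hwdiff : DifferentiableOn ℝ w (Ioo (-L) L) := fun x hx =>
    ((hode x hx).differentiableAt).differentiableWithinAt
  have hderiv_eq : ∀ x ∈ Ioo (-L) L, deriv w x = b x * G' (u x) := fun x hx =>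
    (hode x hx).deriv
  have hbGu : ∀ t ∈ Icc (-L) L,
      Tendsto (fun x => b x * G' (u x)) (𝓝[Icc (-L) L] t) (𝓝 (b t * G' (u t))) := by
    intro t ht
    exact (hbcont t ht).mul (hG'cont.continuousAt.comp_continuousWithinAt (hucont t ht))
  have hw : ∀ t ∈ Icc (-L) L, HasDerivWithinAt w (b t * G' (u t)) (Icc (-L) L) t := by
    intro t ht
    rcases eq_or_lt_of_le ht.1 with h1 | h1
    · -- t = -L
      have hteq : t = -L := h1.symm
      subst hteq
      have hs : Ioo (-L) L ∈ 𝓝[>] (-L) := Ioo_mem_nhdsGT_of_mem ⟨le_rfl, hLL⟩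
      have hlim : ContinuousWithinAt w (Ioo (-L) L) (-L) :=
        (hwcont _ hmLmem).mono Ioo_subset_Icc_self
      have heqnb : 𝓝[>] (-L : ℝ) = 𝓝[Ioo (-L) L] (-L) := by
        rw [nhdsWithin_restrict' (Ioi (-L)) (Iio_mem_nhds hLL), Ioi_inter_Iio]
      have htend : Tendsto (fun x => deriv w x) (𝓝[>] (-L)) (𝓝 (b (-L) * G' (u (-L)))) := by
        apply Tendsto.congr' (Filter.eventuallyEq_of_mem hs
          (fun x hx => (hderiv_eq x hx).symm))
        rw [heqnb]
        exact (hbGu _ hmLmem).mono_left (nhdsWithin_mono _ Ioo_subset_Icc_self)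
      exact (hasDerivWithinAt_Ici_of_tendsto_deriv hwdiff hlim hs htend).mono
        Icc_subset_Ici_self
    rcases eq_or_lt_of_le ht.2 with h2 | h2
    · -- t = L
      have hteq : L = t := h2.symm
      subst hteq
      have hs : Ioo (-L) L ∈ 𝓝[<] L := Ioo_mem_nhdsLT_of_mem ⟨hLL, le_rfl⟩
      have hlim : ContinuousWithinAt w (Ioo (-L) L) L :=
        (hwcont _ hLmem).mono Ioo_subset_Icc_self
      have heqnb : 𝓝[<] (L : ℝ) = 𝓝[Ioo (-L) L] L := by
        rw [nhdsWithin_restrict' (Iio L) (Ioi_mem_nhds hLL)]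
        rw [inter_comm, Ioi_inter_Iio]
      have htend : Tendsto (fun x => deriv w x) (𝓝[<] L) (𝓝 (b L * G' (u L))) := by
        apply Tendsto.congr' (Filter.eventuallyEq_of_mem hs
          (fun x hx => (hderiv_eq x hx).symm))
        rw [heqnb]
        exact (hbGu _ hLmem).mono_left (nhdsWithin_mono _ Ioo_subset_Icc_self)
      exact (hasDerivWithinAt_Iic_of_tendsto_deriv hwdiff hlim hs htend).mono
        Icc_subset_Iic_self
    · exact (hode t ⟨h1, h2⟩).hasDerivWithinAt
  -- bounds on a, b, u
  obtain ⟨xa, hxa, hxamin⟩ := isCompact_Icc.exists_isMinOn (nonempty_Icc.mpr hLL.le) hacont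
  set α : ℝ := a xa with hαdef
  have hα : 0 < α := hapos xa hxa
  have hαle : ∀ x ∈ Icc (-L) L, α ≤ a x := fun x hx => hxamin hx
  obtain ⟨xb, hxb, hxbmax⟩ := isCompact_Icc.exists_isMaxOn (nonempty_Icc.mpr hLL.le) hbcont
  set B : ℝ := b xb with hBdef
  have hB : 0 < B := hbpos xb hxb
  have hBle : ∀ x ∈ Icc (-L) L, b x ≤ B := fun x hx => hxbmax hx
  obtain ⟨R, hR⟩ := isCompact_Icc.exists_bound_of_continuousOn hucont
  set R' : ℝ := max R m with hR'def
  have hmR' : m ≤ R' := le_max_right _ _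
  have huR' : ∀ x ∈ Icc (-L) L, -R' ≤ u x ∧ u x ≤ R' := by
    intro x hx
    have h1 := hR x hx
    rw [Real.norm_eq_abs] at h1
    have h2 := abs_le.mp h1
    have h3 : R ≤ R' := le_max_left _ _
    exact ⟨by linarith [h2.1], by linarith [h2.2]⟩
  obtain ⟨K₀, hK₀0, hK₀⟩ := aux_lipschitz_on_compact hG'lip (-R') R'
  -- clamping functions
  set cl : ℝ → ℝ := fun t => max (min L t) (-L) with hcldef
  have hclmem : ∀ t, cl t ∈ Icc (-L) L := fun t =>
    ⟨le_max_right _ _, max_le (min_le_left _ _) hLL.le⟩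
  have hcleq : ∀ t ∈ Icc (-L) L, cl t = t := fun t ht => by
    simp only [hcldef]
    rw [min_eq_right ht.2, max_eq_left ht.1]
  set χ : ℝ → ℝ := fun s => max (min R' s) (-R') with hχdef
  have hR'0 : (0:ℝ) < R' := lt_of_lt_of_le hm hmR'
  have hχmem : ∀ s, χ s ∈ Icc (-R') R' := fun s =>
    ⟨le_max_right _ _, max_le (min_le_left _ _) (by linarith)⟩
  have hχeq : ∀ s, -R' ≤ s → s ≤ R' → χ s = s := fun s h1 h2 => by
    simp only [hχdef]
    rw [min_eq_right h2, max_eq_left h1]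
  have hχlip : ∀ s t, |χ s - χ t| ≤ |s - t| := by
    intro s t
    calc |χ s - χ t| ≤ |min R' s - min R' t| := abs_max_sub_max_le_abs _ _ _
      _ ≤ max |R' - R'| |s - t| := abs_min_sub_min_le_max _ _ _ _
      _ = |s - t| := by simp
  -- the vector field
  set v : ℝ → ℝ × ℝ → ℝ × ℝ :=
    fun t p => ((a (cl t))⁻¹ * p.2, b (cl t) * G' (χ p.1)) with hvdef
  set Kr : ℝ := max α⁻¹ (B * K₀) with hKrdef
  have hKr0 : 0 ≤ Kr := le_trans (by positivity) (le_max_left _ _)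
  set K : NNReal := Real.toNNReal Kr with hKdef
  have hKcoe : (K : ℝ) = Kr := Real.coe_toNNReal _ hKr0
  have hvlip : ∀ t, LipschitzOnWith K (v t) univ := by
    intro t
    rw [lipschitzOnWith_iff_dist_le_mul]
    intro p _ q _
    have hmemc := hclmem t
    have ha1 : 0 < a (cl t) := hapos _ hmemc
    rw [Prod.dist_eq]
    apply max_le
    · rw [Real.dist_eq]
      have e1 : (a (cl t))⁻¹ * p.2 - (a (cl t))⁻¹ * q.2 = (a (cl t))⁻¹ * (p.2 - q.2) := by
        ring
      rw [hvdef]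
      simp only []
      rw [e1, abs_mul, abs_of_pos (inv_pos.mpr ha1)]
      have h1 : (a (cl t))⁻¹ ≤ α⁻¹ := inv_anti₀ hα (hαle _ hmemc)
      have h2 : |p.2 - q.2| ≤ dist p q := by
        rw [Prod.dist_eq, ← Real.dist_eq]
        exact le_max_right _ _
      calc (a (cl t))⁻¹ * |p.2 - q.2| ≤ α⁻¹ * dist p q :=
            mul_le_mul h1 h2 (abs_nonneg _) (by positivity)
        _ ≤ Kr * dist p q := mul_le_mul_of_nonneg_right (le_max_left _ _) dist_nonneg
        _ = K * dist p q := by rw [hKcoe]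
    · rw [Real.dist_eq]
      have e1 : b (cl t) * G' (χ p.1) - b (cl t) * G' (χ q.1)
          = b (cl t) * (G' (χ p.1) - G' (χ q.1)) := by ring
      rw [hvdef]
      simp only []
      rw [e1, abs_mul, abs_of_pos (hbpos _ hmemc)]
      have h3 : |G' (χ p.1) - G' (χ q.1)| ≤ K₀ * |χ p.1 - χ q.1| :=
        hK₀ _ (hχmem _) _ (hχmem _)
      have h4 : |χ p.1 - χ q.1| ≤ |p.1 - q.1| := hχlip _ _
      have h5 : |p.1 - q.1| ≤ dist p q := by
        rw [Prod.dist_eq, ← Real.dist_eq]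
        exact le_max_left _ _
      have hb' : b (cl t) ≤ B := hBle _ hmemc
      calc b (cl t) * |G' (χ p.1) - G' (χ q.1)| ≤ B * (K₀ * dist p q) := by
            apply mul_le_mul hb' (h3.trans (mul_le_mul_of_nonneg_left (h4.trans h5) hK₀0))
              (abs_nonneg _) hB.le
        _ = B * K₀ * dist p q := by ring
        _ ≤ Kr * dist p q := mul_le_mul_of_nonneg_right (le_max_right _ _) dist_nonneg
        _ = K * dist p q := by rw [hKcoe]
  -- the combined solution function
  set f : ℝ → ℝ × ℝ := fun y => (u y, w y) with hfdef
  have hfcont : ContinuousOn f (Icc (-L) L) := hucont.prodMk hwcont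
  have hfderiv : ∀ t ∈ Icc (-L) L, HasDerivWithinAt f (v t (f t)) (Icc (-L) L) t := by
    intro t ht
    have h1 : HasDerivWithinAt f (u' t, b t * G' (u t)) (Icc (-L) L) t :=
      (hu t ht).prodMk (hw t ht)
    have h2 := huR' t ht
    have hv2 : v t (f t) = (u' t, b t * G' (u t)) := by
      simp only [hvdef, hfdef, hwdef]
      rw [hcleq t ht, hχeq (u t) h2.1 h2.2]
      have : (a t)⁻¹ * (a t * u' t) = u' t :=
        inv_mul_cancel_left₀ (hapos t ht).ne' _
      rw [this]
    rw [hv2]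
    exact h1
  -- u' does not vanish at the endpoints (by ODE uniqueness)
  have huL' : u' L ≠ 0 := by
    intro h0
    have hg' : ∀ t ∈ Ioc (-L) L, HasDerivWithinAt (fun _ : ℝ => ((m : ℝ), (0 : ℝ)))
        (v t (m, 0)) (Iic t) t := by
      intro t _
      have hveq : v t ((m : ℝ), (0 : ℝ)) = ((0 : ℝ), (0 : ℝ)) := by
        simp only [hvdef]
        rw [hχeq m (by linarith) hmR', hG'm]
        simp
      rw [hveq]
      exact hasDerivWithinAt_const _ _ _
    have hf' : ∀ t ∈ Ioc (-L) L, HasDerivWithinAt f (v t (f t)) (Iic t) t := by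
      intro t ht
      rcases eq_or_lt_of_le ht.2 with h2 | h2
      · have hteq : L = t := h2.symm
        subst hteq
        exact (hfderiv L hLmem).mono_of_mem_nhdsWithin (Icc_mem_nhdsLE_of_mem ⟨hLL, le_rfl⟩)
      · exact ((hfderiv t ⟨ht.1.le, h2.le⟩).hasDerivAt
          (Icc_mem_nhds ht.1 h2)).hasDerivWithinAt
    have hend : f L = ((m : ℝ), (0 : ℝ)) := by
      simp only [hfdef, hwdef]
      rw [huL, h0, mul_zero]
    have heq := ODE_solution_unique_of_mem_Icc_left (s := fun _ => (univ : Set (ℝ × ℝ)))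
      (fun t _ => hvlip t) hfcont hf' (fun _ _ => mem_univ _) continuousOn_const hg'
      (fun _ _ => mem_univ _) hend
    have h3 := heq hmLmem
    simp only [hfdef] at h3
    have h4 : u (-L) = m := congrArg Prod.fst h3
    rw [humL] at h4
    linarith
  have humL' : u' (-L) ≠ 0 := by
    intro h0
    have hg' : ∀ t ∈ Ico (-L) L, HasDerivWithinAt (fun _ : ℝ => ((-m : ℝ), (0 : ℝ)))
        (v t (-m, 0)) (Ici t) t := by
      intro t _
      have hveq : v t ((-m : ℝ), (0 : ℝ)) = ((0 : ℝ), (0 : ℝ)) := by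
        simp only [hvdef]
        rw [hχeq (-m) (by linarith) (by linarith), hG'mm]
        simp
      rw [hveq]
      exact hasDerivWithinAt_const _ _ _
    have hf' : ∀ t ∈ Ico (-L) L, HasDerivWithinAt f (v t (f t)) (Ici t) t := by
      intro t ht
      rcases eq_or_lt_of_le ht.1 with h2 | h2
      · have hteq : -L = t := h2
        subst hteq
        exact (hfderiv (-L) hmLmem).mono_of_mem_nhdsWithin
          (Icc_mem_nhdsGE_of_mem ⟨le_rfl, hLL⟩)
      · exact ((hfderiv t ⟨h2.le, ht.2.le⟩).hasDerivAt
          (Icc_mem_nhds h2 ht.2)).hasDerivWithinAt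
    have hend : f (-L) = ((-m : ℝ), (0 : ℝ)) := by
      simp only [hfdef, hwdef]
      rw [humL, h0, mul_zero]
    have heq := ODE_solution_unique_of_mem_Icc_right (s := fun _ => (univ : Set (ℝ × ℝ)))
      (fun t _ => hvlip t) hfcont hf' (fun _ _ => mem_univ _) continuousOn_const hg'
      (fun _ _ => mem_univ _) hend
    have h3 := heq hLmem
    simp only [hfdef] at h3
    have h4 : u L = -m := congrArg Prod.fst h3
    rw [huL] at h4
    linarith
  -- the energy function H
  set H : ℝ → ℝ := fun x => w x * w x / 2 - a x * b x * (G (u x) - G m) with hHdef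
  have hHd : ∀ t ∈ Icc (-L) L,
      HasDerivWithinAt H (-(ab' t * (G (u t) - G m))) (Icc (-L) L) t := by
    intro t ht
    have h1 := ((hw t ht).mul (hw t ht)).div_const 2
    have h2 := (hab t ht).mul
      (((hG (u t)).comp_hasDerivWithinAt t (hu t ht)).sub_const (G m))
    have h3 := h1.sub h2
    have heq : (b t * G' (u t) * w t + w t * (b t * G' (u t))) / 2 -
        (ab' t * ((G ∘ u) t - G m) + a t * b t * (G' (u t) * u' t))
        = -(ab' t * (G (u t) - G m)) := by
      simp only [hwdef, Function.comp]
      ring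
    rw [← heq]
    exact h3
  have hHcont : ContinuousOn H (Icc (-L) L) := fun x hx => (hHd x hx).continuousWithinAt
  have hGnn : ∀ x, 0 ≤ G (u x) - G m := fun x => sub_nonneg.mpr (hGge (u x))
  have hmono1 : MonotoneOn H (Icc (-L) x₀) := by
    apply monotoneOn_of_deriv_nonneg (convex_Icc _ _)
      (hHcont.mono (Icc_subset_Icc_right hx₀2))
    · intro x hx
      rw [interior_Icc] at hx
      have hxI : x ∈ Ioo (-L) L := ⟨hx.1, lt_of_lt_of_le hx.2 hx₀2⟩
      exact (((hHd x (Ioo_subset_Icc_self hxI)).hasDerivAt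
        (Icc_mem_nhds hxI.1 hxI.2)).differentiableAt).differentiableWithinAt
    · intro x hx
      rw [interior_Icc] at hx
      have hxI : x ∈ Ioo (-L) L := ⟨hx.1, lt_of_lt_of_le hx.2 hx₀2⟩
      have hd := ((hHd x (Ioo_subset_Icc_self hxI)).hasDerivAt
        (Icc_mem_nhds hxI.1 hxI.2)).deriv
      rw [hd]
      have h5 := hab₁ x ⟨hx.1, hx.2.le⟩
      have h6 := hGnn x
      nlinarith
  have hmono2 : AntitoneOn H (Icc x₀ L) := by
    apply antitoneOn_of_deriv_nonpos (convex_Icc _ _)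
      (hHcont.mono (Icc_subset_Icc_left hx₀1))
    · intro x hx
      rw [interior_Icc] at hx
      have hxI : x ∈ Ioo (-L) L := ⟨lt_of_le_of_lt hx₀1 hx.1, hx.2⟩
      exact (((hHd x (Ioo_subset_Icc_self hxI)).hasDerivAt
        (Icc_mem_nhds hxI.1 hxI.2)).differentiableAt).differentiableWithinAt
    · intro x hx
      rw [interior_Icc] at hx
      have hxI : x ∈ Ioo (-L) L := ⟨lt_of_le_of_lt hx₀1 hx.1, hx.2⟩
      have hd := ((hHd x (Ioo_subset_Icc_self hxI)).hasDerivAt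
        (Icc_mem_nhds hxI.1 hxI.2)).deriv
      rw [hd]
      have h5 := hab₂ x ⟨hx.1.le, hx.2⟩
      have h6 := hGnn x
      nlinarith
  have hHL : H L = w L * w L / 2 := by
    simp only [hHdef, huL, sub_self, mul_zero, sub_zero]
  have hHmL : H (-L) = w (-L) * w (-L) / 2 := by
    simp only [hHdef, humL, hGsym, sub_self, mul_zero, sub_zero]
  have hHLpos : 0 < H L := by
    rw [hHL]
    have hne : w L ≠ 0 := by
      simp only [hwdef]
      exact mul_ne_zero (hapos L hLmem).ne' huL'
    have := mul_self_pos.mpr hne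
    linarith
  have hHmLpos : 0 < H (-L) := by
    rw [hHmL]
    have hne : w (-L) ≠ 0 := by
      simp only [hwdef]
      exact mul_ne_zero (hapos (-L) hmLmem).ne' humL'
    have := mul_self_pos.mpr hne
    linarith
  have hHpos : ∀ x ∈ Icc (-L) L, 0 < H x := by
    intro x hx
    rcases le_total x x₀ with h | h
    · have := hmono1 ⟨le_rfl, hx₀1⟩ ⟨hx.1, h⟩ hx.1
      linarith
    · have := hmono2 ⟨h, hx.2⟩ ⟨hx₀2, le_rfl⟩ hx.2
      linarith
  have hune : ∀ x ∈ Icc (-L) L, u' x ≠ 0 := by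
    intro x hx h0
    have h1 : H x = -(a x * b x * (G (u x) - G m)) := by
      simp only [hHdef, hwdef]
      rw [h0]
      ring
    have h2 : 0 ≤ a x * b x * (G (u x) - G m) := by
      have h6 := hGnn x
      have h7 := hapos x hx
      have h8 := hbpos x hx
      positivity
    have h9 := hHpos x hx
    rw [h1] at h9
    linarith
  obtain ⟨c, hc, hc'⟩ := exists_hasDerivAt_eq_slope u u' hLL hucont
    (fun x hx => (hu x (Ioo_subset_Icc_self hx)).hasDerivAt (Icc_mem_nhds hx.1 hx.2))
  have hcpos : 0 < u' c := by
    rw [hc', huL, humL]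
    have h1 : (m - -m) / (L - -L) = m / L := by ring
    rw [h1]
    positivity
  have hupos : ∀ x ∈ Icc (-L) L, 0 < u' x := by
    intro x hx
    by_contra hle
    push_neg at hle
    have hlt : u' x < 0 := lt_of_le_of_ne hle (hune x hx)
    have hsub : uIcc x c ⊆ Icc (-L) L :=
      uIcc_subset_Icc hx (Ioo_subset_Icc_self hc)
    have h0mem : (0:ℝ) ∈ uIcc (u' x) (u' c) :=
      mem_uIcc.mpr (Or.inl ⟨hlt.le, hcpos.le⟩)
    obtain ⟨z, hz, hz0⟩ := intermediate_value_uIcc (hu'c.mono hsub) h0mem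
    exact hune z (hsub hz) hz0
  refine ⟨hupos, ?_⟩
  apply strictMonoOn_of_deriv_pos (convex_Icc _ _) hucont
  intro x hx
  rw [interior_Icc] at hx
  have hd := ((hu x (Ioo_subset_Icc_self hx)).hasDerivAt (Icc_mem_nhds hx.1 hx.2)).deriv
  rw [hd]
  exact hupos x (Ioo_subset_Icc_self hx)
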